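/- Let (g,B) be a quadratic Lie algebra over a field K of characteristic 0. Then g admits a symplectic structure ω if and only if there exists an invertible derivation D of g that is skew-symmetric with respect to B. Moreover, the correspondence can be taken to be ω(x,y) = B(Dx,y) for all x,y in g. -/

import Mathlib

/-- A quadratic Lie algebra `(g, B)` over a field `K` of characteristic `0` admits a
symplectic structure `ω` if and only if there exists an invertible derivation `D` of `g`
that is skew-symmetric with respect to `B`; moreover the correspondence can be taken to be
`ω x y = B (D x) y`. -/
theorem stmt_0 (K : Type*) [Field K] [CharZero K]
    (g : Type*) [LieRing g] [LieAlgebra K g] [Module.Finite K g]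
    (B : LinearMap.BilinForm K g)
    (hBnd : B.Nondegenerate)
    (hBsymm : ∀ x y : g, B x y = B y x)
    (hBinv : ∀ x y z : g, B ⁅x, y⁆ z = B x ⁅y, z⁆) :
    ((∃ ω : LinearMap.BilinForm K g, ω.Nondegenerate ∧ (∀ x : g, ω x x = 0) ∧
        ∀ x y z : g, ω ⁅x, y⁆ z + ω ⁅y, z⁆ x + ω ⁅z, x⁆ y = 0) ↔
      (∃ D : g →ₗ[K] g, Function.Bijective D ∧
        (∀ x y : g, D ⁅x, y⁆ = ⁅D x, y⁆ + ⁅x, D y⁆) ∧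
        ∀ x y : g, B (D x) y = - B x (D y))) ∧
    (∀ D : g →ₗ[K] g, Function.Bijective D →
      (∀ x y : g, D ⁅x, y⁆ = ⁅D x, y⁆ + ⁅x, D y⁆) →
      (∀ x y : g, B (D x) y = - B x (D y)) →
      ∃ ω : LinearMap.BilinForm K g, (∀ x y : g, ω x y = B (D x) y) ∧
        ω.Nondegenerate ∧ (∀ x : g, ω x x = 0) ∧
        ∀ x y z : g, ω ⁅x, y⁆ z + ω ⁅y, z⁆ x + ω ⁅z, x⁆ y = 0) := by
  have : FiniteDimensional K g := inferInstance
  -- extensionality via nondegeneracy of B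
  have ext : ∀ a b : g, (∀ z : g, B a z = B b z) → a = b := by
    intro a b h
    have : ∀ z : g, B (a - b) z = 0 := by intro z; simp [map_sub, h z]
    exact sub_eq_zero.mp (hBnd.1 _ this)
  -- useful: B applied to negated first argument
  have hBneg : ∀ a b : g, B (-a) b = - B a b := by intro a b; simp
  -- backward construction, used in both parts
  have key : ∀ D : g →ₗ[K] g, Function.Bijective D →
      (∀ x y : g, D ⁅x, y⁆ = ⁅D x, y⁆ + ⁅x, D y⁆) →
      (∀ x y : g, B (D x) y = - B x (D y)) →
      ∃ ω : LinearMap.BilinForm K g, (∀ x y : g, ω x y = B (D x) y) ∧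
        ω.Nondegenerate ∧ (∀ x : g, ω x x = 0) ∧
        ∀ x y z : g, ω ⁅x, y⁆ z + ω ⁅y, z⁆ x + ω ⁅z, x⁆ y = 0 := by
    intro D hbij hder hskew
    refine ⟨B ∘ₗ D, fun x y => rfl, ?_, ?_, ?_⟩
    · constructor
      · intro x hx
        have hDx : D x = 0 := hBnd.1 _ (fun y => hx y)
        exact hbij.injective (by simpa using hDx)
      · intro y hy
        have hDy : D y = 0 := hBnd.2 _ (fun x => by
          have h := hskew x y
          have h2 : B (D x) y = 0 := hy x
          linear_combination h - h2)
        exact hbij.injective (by simpa using hDy)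
    · intro x
      have h1 : B (D x) x = - B x (D x) := hskew x x
      have h2 : B x (D x) = B (D x) x := hBsymm _ _
      show B (D x) x = 0
      linear_combination (1 : K) / 2 * h1 - (1 : K) / 2 * h2
    · intro x y z
      show B (D ⁅x, y⁆) z + B (D ⁅y, z⁆) x + B (D ⁅z, x⁆) y = 0
      have hd : B (D ⁅x, y⁆) z = B ⁅D x, y⁆ z + B ⁅x, D y⁆ z := by
        rw [hder x y]; simp [map_add]
      have e1 : B ⁅D x, y⁆ z = - B (D ⁅y, z⁆) x := by
        rw [hBinv, hskew x ⁅y, z⁆, hBsymm]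
      have e2 : B ⁅x, D y⁆ z = - B (D ⁅z, x⁆) y := by
        calc B ⁅x, D y⁆ z = B (-⁅D y, x⁆) z := by rw [lie_skew]
          _ = - B ⁅D y, x⁆ z := hBneg _ _
          _ = - B (D y) ⁅x, z⁆ := by rw [hBinv]
          _ = - - B y (D ⁅x, z⁆) := by rw [hskew]
          _ = B (D ⁅x, z⁆) y := by rw [hBsymm]; ring
          _ = B (D (-⁅z, x⁆)) y := by rw [lie_skew]
          _ = - B (D ⁅z, x⁆) y := by rw [map_neg]; exact hBneg _ _
      rw [hd, e1, e2]; ring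
  refine ⟨⟨?_, ?_⟩, key⟩
  · rintro ⟨ω, hnd, halt, hcoc⟩
    have hskew : ∀ x y : g, ω x y = - ω y x := by
      intro x y
      have h := halt (x + y)
      simp only [map_add, LinearMap.add_apply, halt x, halt y] at h
      linear_combination h
    set e := B.toDual hBnd with he
    set D : g →ₗ[K] g := e.symm.toLinearMap ∘ₗ (ω : g →ₗ[K] Module.Dual K g) with hD
    have hBD : ∀ x y : g, B (D x) y = ω x y := by
      intro x y
      simp only [hD, LinearMap.coe_comp, Function.comp_apply, LinearEquiv.coe_coe]
      exact LinearMap.BilinForm.apply_toDual_symm_apply (hB := hBnd) (ω x) y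
    have hinj : Function.Injective D := by
      intro a b hab
      have : ∀ y : g, ω (a - b) y = 0 := by
        intro y
        have := hBD (a - b) y
        rw [← this, map_sub, hab, sub_self] at *
        simpa using this.symm
      exact sub_eq_zero.mp (hnd.1 _ this)
    refine ⟨D, ⟨hinj, (LinearMap.injective_iff_surjective).mp hinj⟩, ?_, ?_⟩
    · intro x y
      apply ext
      intro z
      have l1 : B (D ⁅x, y⁆) z = ω ⁅x, y⁆ z := hBD _ _
      have l2 : B ⁅D x, y⁆ z = - ω ⁅y, z⁆ x := by
        rw [hBinv, hBD, hskew]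
      have l3 : B ⁅x, D y⁆ z = - ω ⁅z, x⁆ y := by
        calc B ⁅x, D y⁆ z = B (-⁅D y, x⁆) z := by rw [lie_skew]
          _ = - B ⁅D y, x⁆ z := hBneg _ _
          _ = - B (D y) ⁅x, z⁆ := by rw [hBinv]
          _ = - ω y ⁅x, z⁆ := by rw [hBD]
          _ = ω ⁅x, z⁆ y := by rw [hskew]; ring
          _ = - ω ⁅z, x⁆ y := by rw [← lie_skew z x, map_neg, LinearMap.neg_apply, neg_neg]
      have hsum : B (⁅D x, y⁆ + ⁅x, D y⁆) z = B ⁅D x, y⁆ z + B ⁅x, D y⁆ z := by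
        simp [map_add]
      rw [l1, hsum, l2, l3]
      linear_combination hcoc x y z
    · intro x y
      rw [hBD, hBsymm, hBD, hskew]
  · rintro ⟨D, hbij, hder, hskew⟩
    obtain ⟨ω, _, h⟩ := key D hbij hder hskew
    exact ⟨ω, h⟩
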